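/- For connected graphs G and H, th_pd×(G □ H) ≤ th_pd×(G)·|V(H)|, and symmetrically th_pd×(G □ H) ≤ th_pd×(H)·|V(G)|. Moreover th_pd×(G □ H) ≥ th_pd×(G) and th_pd×(G □ H) ≥ th_pd×(H). -/
import Mathlib


open SimpleGraph Set

variable {V : Type*} {W : Type*}

/-- The closed neighborhood of a set `S`. -/
def closedNbhdSet (G : SimpleGraph V) (S : Set V) : Set V :=
  S ∪ {w | ∃ u ∈ S, G.Adj u w}

/-- One round of the zero forcing propagation step. -/
def pdStep (G : SimpleGraph V) (A : Set V) : Set V :=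
  A ∪ {w | ∃ u ∈ A, G.neighborSet u \ A = {w}}

/-- `obs G S k` is the set `P^[k](S)` of vertices observed after round `k`. -/
def obs (G : SimpleGraph V) (S : Set V) : ℕ → Set V
  | 0 => S
  | 1 => closedNbhdSet G S
  | (n + 2) => pdStep G (obs G S (n + 1))

/-- `S` is a power dominating set. -/
def IsPDS (G : SimpleGraph V) (S : Set V) : Prop :=
  ∃ t, obs G S t = Set.univ

/-- The power propagation time `pt_pd(G;S)`: least positive `t` with `P^[t](S) = V(G)`. -/
noncomputable def ptpd (G : SimpleGraph V) (S : Set V) : ℕ :=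
  sInf {t | 1 ≤ t ∧ obs G S t = Set.univ}

/-- `S` is a dominating set. -/
def IsDomSet (G : SimpleGraph V) (S : Set V) : Prop :=
  closedNbhdSet G S = Set.univ

/-- The domination number `γ(G)`. -/
noncomputable def gamma (G : SimpleGraph V) : ℕ :=
  sInf {k | ∃ S : Set V, IsDomSet G S ∧ S.ncard = k}

/-- The power domination number `γ_P(G)`. -/
noncomputable def gammaP (G : SimpleGraph V) : ℕ :=
  sInf {k | ∃ S : Set V, IsPDS G S ∧ S.ncard = k}

/-- The product power throttling number `th_pd^×(G)`. -/
noncomputable def thpd (G : SimpleGraph V) : ℕ :=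
  sInf {m | ∃ S : Set V, IsPDS G S ∧ m = S.ncard * ptpd G S}

/-- The power propagation time of `G`: minimum over minimum power dominating sets. -/
noncomputable def ptG (G : SimpleGraph V) : ℕ :=
  sInf {t | ∃ S : Set V, IsPDS G S ∧ S.ncard = gammaP G ∧ t = ptpd G S}

/-- `newObs G S k` is `P^(k)(S)`, the set of vertices first observed in round `k`. -/
def newObs (G : SimpleGraph V) (S : Set V) : ℕ → Set V
  | 0 => S
  | (k + 1) => obs G S (k + 1) \ obs G S k

/-- `rd G S v` is the round in which `v` is first observed. -/
noncomputable def rd (G : SimpleGraph V) (S : Set V) (v : V) : ℕ :=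
  sInf {k | v ∈ obs G S k}

/-! ### Auxiliary lemmas -/

lemma obs_succ_mono (G : SimpleGraph V) (S : Set V) (t : ℕ) :
    obs G S t ⊆ obs G S (t+1) := by
  match t with
  | 0 => exact fun x hx => Or.inl hx
  | 1 => exact fun x hx => Or.inl hx
  | (n+2) => exact fun x hx => Or.inl hx

lemma obs_mono (G : SimpleGraph V) (S : Set V) {s t : ℕ} (h : s ≤ t) :
    obs G S s ⊆ obs G S t := by
  induction t with
  | zero => simp_all
  | succ n ih =>
    rcases Nat.lt_or_ge s (n+1) with h' | h'
    · exact (ih (Nat.lt_succ_iff.mp h')).trans (obs_succ_mono G S n)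
    · have : s = n + 1 := le_antisymm h h'
      subst this; exact subset_rfl

lemma pt_set_nonempty {G : SimpleGraph V} {S : Set V} (h : IsPDS G S) :
    {t | 1 ≤ t ∧ obs G S t = Set.univ}.Nonempty := by
  obtain ⟨t, ht⟩ := h
  exact ⟨max t 1, le_max_right _ _,
    eq_univ_of_univ_subset (ht ▸ obs_mono G S (le_max_left t 1))⟩

lemma ptpd_mem {G : SimpleGraph V} {S : Set V} (h : IsPDS G S) :
    1 ≤ ptpd G S ∧ obs G S (ptpd G S) = Set.univ :=
  Nat.sInf_mem (pt_set_nonempty h)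

lemma thpd_nonempty (G : SimpleGraph V) :
    {m | ∃ S : Set V, IsPDS G S ∧ m = S.ncard * ptpd G S}.Nonempty :=
  ⟨_, Set.univ, ⟨0, rfl⟩, rfl⟩

lemma lift_obs_fst (G : SimpleGraph V) (H : SimpleGraph W) (S : Set V) :
    ∀ t, (obs G S t) ×ˢ (Set.univ : Set W) ⊆ obs (G □ H) (S ×ˢ Set.univ) t := by
  intro t
  induction t with
  | zero => exact subset_rfl
  | succ n ih =>
    match n, ih with
    | 0, _ =>
      rintro ⟨x, y⟩ ⟨hx, -⟩
      rcases hx with hx | ⟨u, hu, hadj⟩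
      · exact Or.inl ⟨hx, trivial⟩
      · exact Or.inr ⟨(u, y), ⟨hu, trivial⟩, Or.inl ⟨hadj, rfl⟩⟩
    | (m+1), ih =>
      rintro ⟨x, y⟩ ⟨hx, -⟩
      set A := obs G S (m+1) with hA
      set A' := obs (G □ H) (S ×ˢ Set.univ) (m+1) with hA'
      rcases hx with hx | ⟨u, hu, hnb⟩
      · exact Or.inl (ih ⟨hx, trivial⟩)
      · by_cases hmem : (x, y) ∈ A'
        · exact Or.inl hmem
        · refine Or.inr ⟨(u, y), ih ⟨hu, trivial⟩, ?_⟩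
          have hxA : x ∉ A := by
            intro h; exact hmem (ih ⟨h, trivial⟩)
          have hadjux : G.Adj u x := by
            have : x ∈ G.neighborSet u \ A := hnb ▸ rfl
            exact this.1
          ext ⟨x', y'⟩
          simp only [Set.mem_diff, SimpleGraph.mem_neighborSet, boxProd_adj,
            Set.mem_singleton_iff, Prod.mk.injEq]
          constructor
          · rintro ⟨hadj | hadj, hnA'⟩
            · obtain ⟨hGa, hy⟩ := hadj
              have hx'A : x' ∉ A := by
                intro h
                exact hnA' (ih ⟨h, by trivial⟩)
              have : x' ∈ G.neighborSet u \ A := ⟨hGa, hx'A⟩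
              rw [hnb] at this
              exact ⟨this, hy.symm⟩
            · obtain ⟨hHa, hx'⟩ := hadj
              exact absurd (ih ⟨hx' ▸ hu, trivial⟩) hnA'
          · rintro ⟨rfl, rfl⟩
            exact ⟨Or.inl ⟨hadjux, rfl⟩, hmem⟩

lemma lift_obs_snd (G : SimpleGraph V) (H : SimpleGraph W) (S : Set W) :
    ∀ t, (Set.univ : Set V) ×ˢ (obs H S t) ⊆ obs (G □ H) (Set.univ ×ˢ S) t := by
  intro t
  induction t with
  | zero => exact subset_rfl
  | succ n ih =>
    match n, ih with
    | 0, _ =>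
      rintro ⟨x, y⟩ ⟨-, hy⟩
      rcases hy with hy | ⟨u, hu, hadj⟩
      · exact Or.inl ⟨trivial, hy⟩
      · exact Or.inr ⟨(x, u), ⟨trivial, hu⟩, Or.inr ⟨hadj, rfl⟩⟩
    | (m+1), ih =>
      rintro ⟨x, y⟩ ⟨-, hy⟩
      set A := obs H S (m+1) with hA
      set A' := obs (G □ H) ((Set.univ : Set V) ×ˢ S) (m+1) with hA'
      rcases hy with hy | ⟨u, hu, hnb⟩
      · exact Or.inl (ih ⟨trivial, hy⟩)
      · by_cases hmem : (x, y) ∈ A'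
        · exact Or.inl hmem
        · refine Or.inr ⟨(x, u), ih ⟨trivial, hu⟩, ?_⟩
          have hyA : y ∉ A := by
            intro h; exact hmem (ih ⟨trivial, h⟩)
          have hadjuy : H.Adj u y := by
            have : y ∈ H.neighborSet u \ A := hnb ▸ rfl
            exact this.1
          ext ⟨x', y'⟩
          simp only [Set.mem_diff, SimpleGraph.mem_neighborSet, boxProd_adj,
            Set.mem_singleton_iff, Prod.mk.injEq]
          constructor
          · rintro ⟨hadj | hadj, hnA'⟩
            · obtain ⟨hGa, hx'⟩ := hadj
              exact absurd (ih ⟨trivial, hx' ▸ hu⟩) hnA'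
            · obtain ⟨hHa, hy'⟩ := hadj
              have hy'A : y' ∉ A := by
                intro h
                exact hnA' (ih ⟨trivial, h⟩)
              have : y' ∈ H.neighborSet u \ A := ⟨hHa, hy'A⟩
              rw [hnb] at this
              exact ⟨hy'.symm, this⟩
          · rintro ⟨rfl, rfl⟩
            exact ⟨Or.inr ⟨hadjuy, rfl⟩, hmem⟩

lemma proj_obs_fst (G : SimpleGraph V) (H : SimpleGraph W) (S : Set (V × W)) :
    ∀ t, Prod.fst '' obs (G □ H) S t ⊆ obs G (Prod.fst '' S) t := by
  intro t
  induction t with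
  | zero => exact subset_rfl
  | succ n ih =>
    match n, ih with
    | 0, _ =>
      rintro x ⟨⟨x', y⟩, hxy, rfl⟩
      rcases hxy with hxy | ⟨⟨u, v⟩, huv, hadj⟩
      · exact Or.inl ⟨_, hxy, rfl⟩
      · rcases hadj with ⟨hGa, _⟩ | ⟨_, hx⟩
        · exact Or.inr ⟨u, ⟨_, huv, rfl⟩, hGa⟩
        · exact Or.inl ⟨_, huv, hx⟩
    | (m+1), ih =>
      rintro x ⟨⟨x', y⟩, hxy, rfl⟩
      set A' := obs (G □ H) S (m+1) with hA'
      set A := obs G (Prod.fst '' S) (m+1) with hA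
      rcases hxy with hxy | ⟨⟨u, v⟩, huv, hnb⟩
      · exact Or.inl (ih ⟨_, hxy, rfl⟩)
      · by_cases hxA : x' ∈ A
        · exact Or.inl hxA
        · have hforced : (x', y) ∈ (G □ H).neighborSet (u, v) \ A' := hnb ▸ rfl
          obtain ⟨hadj, hnA'⟩ := hforced
          have huA : u ∈ A := ih ⟨_, huv, rfl⟩
          rcases hadj with ⟨hGa, hy⟩ | ⟨_, hxu⟩
          · refine Or.inr ⟨u, huA, ?_⟩
            ext z
            simp only [Set.mem_diff, SimpleGraph.mem_neighborSet, Set.mem_singleton_iff]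
            constructor
            · rintro ⟨hGz, hzA⟩
              have h1 : (z, v) ∈ (G □ H).neighborSet (u, v) := Or.inl ⟨hGz, rfl⟩
              have h2 : (z, v) ∉ A' := fun h => hzA (ih ⟨_, h, rfl⟩)
              have : (z, v) ∈ ({((x', y) : V × W)} : Set (V × W)) := hnb ▸ ⟨h1, h2⟩
              exact congrArg Prod.fst this
            · rintro rfl
              exact ⟨hGa, hxA⟩
          · simp only [] at hxu; exact absurd (hxu ▸ huA) hxA

lemma proj_obs_snd (G : SimpleGraph V) (H : SimpleGraph W) (S : Set (V × W)) :
    ∀ t, Prod.snd '' obs (G □ H) S t ⊆ obs H (Prod.snd '' S) t := by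
  intro t
  induction t with
  | zero => exact subset_rfl
  | succ n ih =>
    match n, ih with
    | 0, _ =>
      rintro y ⟨⟨x, y'⟩, hxy, rfl⟩
      rcases hxy with hxy | ⟨⟨u, v⟩, huv, hadj⟩
      · exact Or.inl ⟨_, hxy, rfl⟩
      · rcases hadj with ⟨_, hy⟩ | ⟨hHa, _⟩
        · exact Or.inl ⟨_, huv, hy⟩
        · exact Or.inr ⟨v, ⟨_, huv, rfl⟩, hHa⟩
    | (m+1), ih =>
      rintro y ⟨⟨x, y'⟩, hxy, rfl⟩
      set A' := obs (G □ H) S (m+1) with hA'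
      set A := obs H (Prod.snd '' S) (m+1) with hA
      rcases hxy with hxy | ⟨⟨u, v⟩, huv, hnb⟩
      · exact Or.inl (ih ⟨_, hxy, rfl⟩)
      · by_cases hyA : y' ∈ A
        · exact Or.inl hyA
        · have hforced : (x, y') ∈ (G □ H).neighborSet (u, v) \ A' := hnb ▸ rfl
          obtain ⟨hadj, hnA'⟩ := hforced
          have hvA : v ∈ A := ih ⟨_, huv, rfl⟩
          rcases hadj with ⟨_, hyv⟩ | ⟨hHa, hx⟩
          · simp only [] at hyv; exact absurd (hyv ▸ hvA) hyA
          · refine Or.inr ⟨v, hvA, ?_⟩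
            ext z
            simp only [Set.mem_diff, SimpleGraph.mem_neighborSet, Set.mem_singleton_iff]
            constructor
            · rintro ⟨hHz, hzA⟩
              have h1 : (u, z) ∈ (G □ H).neighborSet (u, v) := Or.inr ⟨hHz, rfl⟩
              have h2 : (u, z) ∉ A' := fun h => hzA (ih ⟨_, h, rfl⟩)
              have : (u, z) ∈ ({((x, y') : V × W)} : Set (V × W)) := hnb ▸ ⟨h1, h2⟩
              exact congrArg Prod.snd this
            · rintro rfl
              exact ⟨hHa, hyA⟩

lemma ncard_prod_univ [Fintype V] [Fintype W] (S : Set V) :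
    (S ×ˢ (Set.univ : Set W)).ncard = S.ncard * Fintype.card W := by
  calc (S ×ˢ (Set.univ : Set W)).ncard
      = Nat.card ↥(S ×ˢ (Set.univ : Set W)) := (Nat.card_coe_set_eq _).symm
    _ = Nat.card (↥S × ↥(Set.univ : Set W)) := Nat.card_congr (Equiv.Set.prod _ _)
    _ = Nat.card ↥S * Nat.card ↥(Set.univ : Set W) := Nat.card_prod _ _
    _ = S.ncard * Fintype.card W := by
        rw [Nat.card_coe_set_eq, Nat.card_coe_set_eq, Set.ncard_univ,
          Nat.card_eq_fintype_card]

lemma ncard_univ_prod [Fintype V] [Fintype W] (S : Set W) :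
    ((Set.univ : Set V) ×ˢ S).ncard = S.ncard * Fintype.card V := by
  calc ((Set.univ : Set V) ×ˢ S).ncard
      = Nat.card ↥((Set.univ : Set V) ×ˢ S) := (Nat.card_coe_set_eq _).symm
    _ = Nat.card (↥(Set.univ : Set V) × ↥S) := Nat.card_congr (Equiv.Set.prod _ _)
    _ = Nat.card ↥(Set.univ : Set V) * Nat.card ↥S := Nat.card_prod _ _
    _ = S.ncard * Fintype.card V := by
        rw [Nat.card_coe_set_eq, Nat.card_coe_set_eq, Set.ncard_univ,
          Nat.card_eq_fintype_card, Nat.mul_comm]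

theorem stmt19 [Fintype V] [Fintype W] (G : SimpleGraph V) (H : SimpleGraph W)
    (hG : G.Connected) (hH : H.Connected) :
    thpd (G □ H) ≤ thpd G * Fintype.card W ∧
    thpd (G □ H) ≤ thpd H * Fintype.card V ∧
    thpd G ≤ thpd (G □ H) ∧ thpd H ≤ thpd (G □ H) := by
  have hVne : Nonempty V := hG.nonempty
  have hWne : Nonempty W := hH.nonempty
  -- realize the infima
  obtain ⟨SG, hSG, hEqG⟩ := Nat.sInf_mem (thpd_nonempty G)
  have hEqG : thpd G = SG.ncard * ptpd G SG := hEqG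
  obtain ⟨SH, hSH, hEqH⟩ := Nat.sInf_mem (thpd_nonempty H)
  have hEqH : thpd H = SH.ncard * ptpd H SH := hEqH
  obtain ⟨SP, hSP, hEqP⟩ := Nat.sInf_mem (thpd_nonempty (G □ H))
  have hEqP : thpd (G □ H) = SP.ncard * ptpd (G □ H) SP := hEqP
  refine ⟨?_, ?_, ?_, ?_⟩
  · -- thpd (G □ H) ≤ thpd G * card W
    obtain ⟨h1, h2⟩ := ptpd_mem hSG
    have hobs : obs (G □ H) (SG ×ˢ Set.univ) (ptpd G SG) = Set.univ := by
      apply eq_univ_of_univ_subset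
      rintro ⟨x, y⟩ -
      exact lift_obs_fst G H SG _ ⟨h2.symm ▸ (Set.mem_univ x), trivial⟩
    have hPDS : IsPDS (G □ H) (SG ×ˢ Set.univ) := ⟨_, hobs⟩
    have hpt : ptpd (G □ H) (SG ×ˢ Set.univ) ≤ ptpd G SG := Nat.sInf_le ⟨h1, hobs⟩
    calc thpd (G □ H) ≤ (SG ×ˢ (Set.univ : Set W)).ncard * ptpd (G □ H) (SG ×ˢ Set.univ) :=
          Nat.sInf_le ⟨_, hPDS, rfl⟩
      _ ≤ (SG.ncard * Fintype.card W) * ptpd G SG := by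
          rw [ncard_prod_univ]; exact Nat.mul_le_mul_left _ hpt
      _ = (SG.ncard * ptpd G SG) * Fintype.card W := by ring
      _ = thpd G * Fintype.card W := by rw [hEqG]
  · -- thpd (G □ H) ≤ thpd H * card V
    obtain ⟨h1, h2⟩ := ptpd_mem hSH
    have hobs : obs (G □ H) ((Set.univ : Set V) ×ˢ SH) (ptpd H SH) = Set.univ := by
      apply eq_univ_of_univ_subset
      rintro ⟨x, y⟩ -
      exact lift_obs_snd G H SH _ ⟨trivial, h2.symm ▸ (Set.mem_univ y)⟩
    have hPDS : IsPDS (G □ H) ((Set.univ : Set V) ×ˢ SH) := ⟨_, hobs⟩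
    have hpt : ptpd (G □ H) ((Set.univ : Set V) ×ˢ SH) ≤ ptpd H SH := Nat.sInf_le ⟨h1, hobs⟩
    calc thpd (G □ H) ≤ ((Set.univ : Set V) ×ˢ SH).ncard * ptpd (G □ H) (Set.univ ×ˢ SH) :=
          Nat.sInf_le ⟨_, hPDS, rfl⟩
      _ ≤ (SH.ncard * Fintype.card V) * ptpd H SH := by
          rw [ncard_univ_prod]; exact Nat.mul_le_mul_left _ hpt
      _ = (SH.ncard * ptpd H SH) * Fintype.card V := by ring
      _ = thpd H * Fintype.card V := by rw [hEqH]
  · -- thpd G ≤ thpd (G □ H)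
    obtain ⟨h1, h2⟩ := ptpd_mem hSP
    obtain ⟨w₀⟩ := hWne
    have hobs : obs G (Prod.fst '' SP) (ptpd (G □ H) SP) = Set.univ := by
      apply eq_univ_of_univ_subset
      rintro x -
      exact proj_obs_fst G H SP _ ⟨(x, w₀), h2.symm ▸ Set.mem_univ _, rfl⟩
    have hPDS : IsPDS G (Prod.fst '' SP) := ⟨_, hobs⟩
    have hpt : ptpd G (Prod.fst '' SP) ≤ ptpd (G □ H) SP := Nat.sInf_le ⟨h1, hobs⟩
    calc thpd G ≤ (Prod.fst '' SP).ncard * ptpd G (Prod.fst '' SP) :=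
          Nat.sInf_le ⟨_, hPDS, rfl⟩
      _ ≤ SP.ncard * ptpd (G □ H) SP :=
          Nat.mul_le_mul (Set.ncard_image_le (Set.toFinite SP)) hpt
      _ = thpd (G □ H) := hEqP.symm
  · -- thpd H ≤ thpd (G □ H)
    obtain ⟨h1, h2⟩ := ptpd_mem hSP
    obtain ⟨v₀⟩ := hVne
    have hobs : obs H (Prod.snd '' SP) (ptpd (G □ H) SP) = Set.univ := by
      apply eq_univ_of_univ_subset
      rintro y -
      exact proj_obs_snd G H SP _ ⟨(v₀, y), h2.symm ▸ Set.mem_univ _, rfl⟩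
    have hPDS : IsPDS H (Prod.snd '' SP) := ⟨_, hobs⟩
    have hpt : ptpd H (Prod.snd '' SP) ≤ ptpd (G □ H) SP := Nat.sInf_le ⟨h1, hobs⟩
    calc thpd H ≤ (Prod.snd '' SP).ncard * ptpd H (Prod.snd '' SP) :=
          Nat.sInf_le ⟨_, hPDS, rfl⟩
      _ ≤ SP.ncard * ptpd (G □ H) SP :=
          Nat.mul_le_mul (Set.ncard_image_le (Set.toFinite SP)) hpt
      _ = thpd (G □ H) := hEqP.symm
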